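/- Let n₁, n₂, …, n_r be integers with r ≥ 1 and nᵢ ≥ 2 for all i. Define δ_k = n_{k+1}·n_{k+2}···n_r for k = 0, 1, …, r−1 and δ_r = 1. Then the sequence (δ₀, δ₁, …, δ_r) satisfies: (I) setting d_i = gcd(δ₀, …, δ_{i−1}) for 1 ≤ i ≤ r+1 and m_i = d_i/d_{i+1} for 1 ≤ i ≤ r, we have d_{r+1} = 1 and m_i > 1 for all 1 ≤ i ≤ r; (II) for 1 ≤ i ≤ r, m_i·δ_i belongs to the additive semigroup generated by δ₀, δ₁, …, δ_{i−1}; (III) δ₀ > δ₁ and δ_i < δ_{i−1}·m_{i−1} for i = 2, 3, …, r. -/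

import Mathlib

/-- The sequence δ_k = n_{k+1}···n_r (with δ_r = 1) built from integers
n_1,…,n_r ≥ 2 satisfies the three conditions (I), (II), (III) of a δ-sequence. -/
theorem stmt0 (r : ℕ) (hr : 1 ≤ r) (n : ℕ → ℕ)
    (hn : ∀ i, 1 ≤ i → i ≤ r → 2 ≤ n i)
    (δ : ℕ → ℕ) (hδ : ∀ k, k ≤ r → δ k = ∏ j ∈ Finset.Icc (k + 1) r, n j)
    (d : ℕ → ℕ) (hd : ∀ i, d i = Finset.gcd (Finset.range i) δ)
    (m : ℕ → ℕ) (hm : ∀ i, m i = d i / d (i + 1)) :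
    (d (r + 1) = 1 ∧ ∀ i, 1 ≤ i → i ≤ r → 1 < m i) ∧
    (∀ i, 1 ≤ i → i ≤ r →
      (m i * δ i) ∈ AddSubmonoid.closure (δ '' {j | j < i})) ∧
    (δ 1 < δ 0 ∧ ∀ i, 2 ≤ i → i ≤ r → δ i < δ (i - 1) * m (i - 1)) := by
  have hδpos : ∀ k, k ≤ r → 0 < δ k := by
    intro k hk
    rw [hδ k hk]
    apply Finset.prod_pos
    intro j hj
    simp only [Finset.mem_Icc] at hj
    have : 2 ≤ n j := hn j (by omega) hj.2
    omega
  have hδr : δ r = 1 := by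
    rw [hδ r le_rfl, Finset.Icc_eq_empty (by omega), Finset.prod_empty]
  have hstep : ∀ k, 1 ≤ k → k ≤ r → δ (k - 1) = n k * δ k := by
    intro k h1 h2
    rw [hδ (k - 1) (by omega), hδ k h2]
    have hk : k - 1 + 1 = k := by omega
    rw [hk, Finset.Icc_add_one_left_eq_Ioc, ← Finset.Ioc_insert_left h2,
      Finset.prod_insert (by simp)]
  have hdval : ∀ i, i ≤ r → d (i + 1) = δ i := by
    intro i
    induction i with
    | zero =>
      intro _
      simp [hd, Finset.range_one]
    | succ i ih =>
      intro hi
      have hdi : d (i + 1) = δ i := ih (by omega)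
      rw [hd, Finset.range_add_one, Finset.gcd_insert, ← hd, hdi]
      have hdiv : δ (i + 1) ∣ δ i := by
        have := hstep (i + 1) (by omega) hi
        simp only [Nat.add_sub_cancel] at this
        exact ⟨n (i + 1), by rw [this]; ring⟩
      exact Nat.gcd_eq_left hdiv
  have hmval : ∀ i, 1 ≤ i → i ≤ r → m i = n i := by
    intro i h1 h2
    have h1' : d i = δ (i - 1) := by
      have := hdval (i - 1) (by omega)
      rwa [show i - 1 + 1 = i by omega] at this
    rw [hm, h1', hdval i h2, hstep i h1 h2, Nat.mul_div_cancel _ (hδpos i h2)]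
  refine ⟨⟨by rw [hdval r le_rfl, hδr], ?_⟩, ?_, ?_, ?_⟩
  · intro i h1 h2
    rw [hmval i h1 h2]
    exact lt_of_lt_of_le one_lt_two (hn i h1 h2)
  · intro i h1 h2
    have : m i * δ i = δ (i - 1) := by
      rw [hmval i h1 h2, ← hstep i h1 h2]
    rw [this]
    exact AddSubmonoid.subset_closure (Set.mem_image_of_mem δ (show i - 1 < i by omega))
  · have h0 : δ 0 = n 1 * δ 1 := by
      have := hstep 1 le_rfl hr
      simpa using this
    have h1 : 2 ≤ n 1 := hn 1 le_rfl hr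
    have h2 : 0 < δ 1 := hδpos 1 hr
    nlinarith
  · intro i h2 h3
    have hlt : δ i < δ (i - 1) := by
      have hs := hstep i (by omega) h3
      have hni : 2 ≤ n i := hn i (by omega) h3
      have := hδpos i h3
      nlinarith
    have hmpos : 0 < m (i - 1) := by
      have := hmval (i - 1) (by omega) (by omega)
      have := hn (i - 1) (by omega) (by omega)
      omega
    calc δ i < δ (i - 1) := hlt
      _ ≤ δ (i - 1) * m (i - 1) := Nat.le_mul_of_pos_right _ hmpos
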